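/- No braid whose super-Gauss-Epple image has permutation part equal to the transposition (1,2) has its square in the kernel of the super-Gauss-Epple homomorphism: if β ∈ B_n satisfies SGE(β) = (M, (1,2)) for some matrix M, then SGE(β²) is not the identity element of Mat_n(ℤ) ⋊ S_n. (Consequently the image of SGE is not a semidirect product of its normal abelian subgroup by S_n.) -/

import Mathlib

/-- The braid relations. -/
def braidRels (n : ℕ) : Set (FreeGroup (Fin (n - 1))) :=
  {r | (∃ i j : Fin (n - 1), (j : ℕ) = (i : ℕ) + 1 ∧
        r = .of i * .of j * .of i * (.of j * .of i * .of j)⁻¹) ∨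
       (∃ i j : Fin (n - 1), (i : ℕ) + 2 ≤ (j : ℕ) ∧
        r = .of i * .of j * (.of j * .of i)⁻¹)}

/-- The braid group `B_n`. -/
abbrev BraidGroup (n : ℕ) := PresentedGroup (braidRels n)

/-- The Artin generator `σ_{k+1}` (0-based index `k`). -/
def braidGen {n : ℕ} (i : Fin (n - 1)) : BraidGroup n := PresentedGroup.of i

/-- The strand index `k`, viewed inside `Fin n`. -/
def lo {n : ℕ} (k : Fin (n - 1)) : Fin n := ⟨k, by have := k.isLt; omega⟩

/-- The strand index `k + 1`, viewed inside `Fin n`. -/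
def hi {n : ℕ} (k : Fin (n - 1)) : Fin n := ⟨(k : ℕ) + 1, by have := k.isLt; omega⟩

/-- The action of `S_n` on `n × n` integer matrices, simultaneously permuting rows and
columns: `(π·M)[i,j] = M[π⁻¹ i, π⁻¹ j]`. -/
def matPermAct (n : ℕ) :
    Equiv.Perm (Fin n) →* MulAut (Multiplicative (Matrix (Fin n) (Fin n) ℤ)) where
  toFun π :=
    { toFun := fun M => Multiplicative.ofAdd fun i j => Multiplicative.toAdd M (π⁻¹ i) (π⁻¹ j)
      invFun := fun M => Multiplicative.ofAdd fun i j => Multiplicative.toAdd M (π i) (π j)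
      left_inv := fun M => by
        show Multiplicative.ofAdd (fun i j => Multiplicative.toAdd M (π⁻¹ (π i)) (π⁻¹ (π j))) = M
        simp
        rfl
      right_inv := fun M => by
        show Multiplicative.ofAdd (fun i j => Multiplicative.toAdd M (π (π⁻¹ i)) (π (π⁻¹ j))) = M
        simp
        rfl
      map_mul' := fun M M' => rfl }
  map_one' := by ext M; simp
  map_mul' := fun π ρ => by
    ext M
    simp [Equiv.Perm.mul_apply]
    rfl

/-- The semidirect product `Mat_n(ℤ) ⋊ S_n`. -/
abbrev SGEGroup (n : ℕ) :=
  SemidirectProduct (Multiplicative (Matrix (Fin n) (Fin n) ℤ)) (Equiv.Perm (Fin n))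
    (matPermAct n)

/-- The value `(O_{k,k+1}, (k, k+1))` of the super-Gauss-Epple homomorphism on the
generator `σ_k`, where `O_{i,j}` is the matrix with a single `1` entry at `(i,j)`. -/
def sgeGen {n : ℕ} (k : Fin (n - 1)) : SGEGroup n :=
  ⟨Multiplicative.ofAdd (Matrix.single (lo k) (hi k) 1), Equiv.swap (lo k) (hi k)⟩

section Aux

/-- Sum of entries as an additive hom. -/
def sumEntriesHom (n : ℕ) : Matrix (Fin n) (Fin n) ℤ →+ ℤ where
  toFun M := ∑ i, ∑ j, M i j
  map_zero' := by simp
  map_add' := by intro M N; simp [Matrix.add_apply, Finset.sum_add_distrib]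

lemma sumEntries_perm_inv {n : ℕ} (π : Equiv.Perm (Fin n)) (M : Matrix (Fin n) (Fin n) ℤ) :
    ∑ i, ∑ j, M (π⁻¹ i) (π⁻¹ j) = ∑ i, ∑ j, M i j := by
  rw [Equiv.sum_comp π⁻¹ (fun i => ∑ j, M i (π⁻¹ j))]
  exact Finset.sum_congr rfl fun i _ => Equiv.sum_comp π⁻¹ (M i)

/-- Sum of entries of the matrix part, as a hom out of the semidirect product. -/
def sgeSumHom (n : ℕ) : SGEGroup n →* Multiplicative ℤ :=
  SemidirectProduct.lift (sumEntriesHom n).toMultiplicative 1 (by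
    intro π
    refine MonoidHom.ext fun M => ?_
    simp only [MonoidHom.coe_comp, Function.comp, MulEquiv.coe_toMonoidHom,
      MulAut.conj_apply, MonoidHom.one_apply, one_mul, mul_one, inv_one]
    show Multiplicative.ofAdd (∑ i, ∑ j, (Multiplicative.toAdd M) (π⁻¹ i) (π⁻¹ j))
        = Multiplicative.ofAdd (∑ i, ∑ j, (Multiplicative.toAdd M) i j)
    rw [sumEntries_perm_inv])

/-- `ℤˣ → ZMod 2` (multiplicatively). -/
def unitsToZMod2 : ℤˣ →* Multiplicative (ZMod 2) where
  toFun u := Multiplicative.ofAdd (if u = 1 then 0 else 1)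
  map_one' := by simp
  map_mul' u v := by
    rcases Int.units_eq_one_or u with h | h <;> rcases Int.units_eq_one_or v with h' | h' <;>
      subst h <;> subst h' <;> decide

/-- The mod-2 invariant: (sum of entries) + sign parity. -/
def sgeParityHom (n : ℕ) : SGEGroup n →* Multiplicative (ZMod 2) :=
  SemidirectProduct.lift
    (((Int.castAddHom (ZMod 2)).comp (sumEntriesHom n)).toMultiplicative)
    (unitsToZMod2.comp Equiv.Perm.sign) (by
    intro π
    refine MonoidHom.ext fun M => ?_
    simp only [MonoidHom.coe_comp, Function.comp, MulEquiv.coe_toMonoidHom,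
      MulAut.conj_apply, mul_inv_cancel_comm]
    show Multiplicative.ofAdd
        ((∑ i, ∑ j, (Multiplicative.toAdd M) (π⁻¹ i) (π⁻¹ j) : ℤ) : ZMod 2)
      = Multiplicative.ofAdd ((∑ i, ∑ j, (Multiplicative.toAdd M) i j : ℤ) : ZMod 2)
    rw [sumEntries_perm_inv])

end Aux

/-- If `SGE(β) = (M, (1,2))` for some matrix `M`, then `SGE(β²) ≠ 1`: no braid whose
super-Gauss-Epple image has permutation part `(1,2)` has its square in the kernel of
`SGE`. -/
theorem sq_not_in_ker_SGE (n : ℕ) (hn : 2 ≤ n)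
    (SGE : BraidGroup n →* SGEGroup n)
    (hSGE : ∀ k : Fin (n - 1), SGE (braidGen k) = sgeGen k)
    (β : BraidGroup n) (M : Matrix (Fin n) (Fin n) ℤ)
    (hβ : SGE β = ⟨Multiplicative.ofAdd M,
      Equiv.swap (⟨0, by omega⟩ : Fin n) (⟨1, by omega⟩ : Fin n)⟩) :
    SGE (β * β) ≠ 1 := by
  -- The parity invariant vanishes on the image of `SGE`.
  have hF : (sgeParityHom n).comp SGE = 1 := by
    refine PresentedGroup.ext fun k => ?_
    simp only [MonoidHom.comp_apply, MonoidHom.one_apply]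
    rw [show PresentedGroup.of k = braidGen k from rfl, hSGE]
    show Multiplicative.ofAdd
        ((∑ i, ∑ j, Matrix.single (lo k) (hi k) (1 : ℤ) i j : ℤ) : ZMod 2)
      * unitsToZMod2 (Equiv.Perm.sign (Equiv.swap (lo k) (hi k))) = 1
    have hne : lo k ≠ hi k := by simp [lo, hi, Fin.ext_iff]
    rw [Equiv.Perm.sign_swap hne]
    have hsum : (∑ i, ∑ j, Matrix.single (lo k) (hi k) (1 : ℤ) i j) = 1 := by
      simp [Matrix.single, ite_and, Finset.sum_ite_eq]
    rw [hsum]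
    decide
  have hFβ : sgeParityHom n (SGE β) = 1 := by
    have := DFunLike.congr_fun hF β
    simpa using this
  rw [hβ] at hFβ
  have h01 : (⟨0, by omega⟩ : Fin n) ≠ ⟨1, by omega⟩ := by simp [Fin.ext_iff]
  have hFval : Multiplicative.ofAdd ((∑ i, ∑ j, M i j : ℤ) : ZMod 2)
      * unitsToZMod2 (Equiv.Perm.sign
          (Equiv.swap (⟨0, by omega⟩ : Fin n) ⟨1, by omega⟩)) = 1 := hFβ
  rw [Equiv.Perm.sign_swap h01] at hFval
  rw [show unitsToZMod2 (-1) = Multiplicative.ofAdd (1 : ZMod 2) by decide] at hFval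
  have h2 : ((∑ i, ∑ j, M i j : ℤ) : ZMod 2) + 1 = 0 := congrArg Multiplicative.toAdd hFval
  have hodd : ((∑ i, ∑ j, M i j : ℤ) : ZMod 2) = 1 := by
    have := eq_neg_of_add_eq_zero_left h2
    rw [this]; decide
  have hsne : (∑ i, ∑ j, M i j : ℤ) ≠ 0 := by
    intro h0
    rw [h0] at hodd
    simp at hodd
  -- Now apply the sum-of-entries hom to `SGE (β * β)`.
  intro hcon
  have h1 : sgeSumHom n (SGE (β * β)) = 1 := by rw [hcon]; simp
  rw [map_mul, hβ, map_mul] at h1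
  have h3 : Multiplicative.ofAdd (∑ i, ∑ j, M i j)
      * (1 : Equiv.Perm (Fin n) →* Multiplicative ℤ)
          (Equiv.swap (⟨0, by omega⟩ : Fin n) ⟨1, by omega⟩)
      * (Multiplicative.ofAdd (∑ i, ∑ j, M i j)
        * (1 : Equiv.Perm (Fin n) →* Multiplicative ℤ)
            (Equiv.swap (⟨0, by omega⟩ : Fin n) ⟨1, by omega⟩)) = 1 := h1
  simp only [MonoidHom.one_apply, mul_one] at h3
  have h4 : (∑ i, ∑ j, M i j : ℤ) + (∑ i, ∑ j, M i j : ℤ) = 0 :=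
    congrArg Multiplicative.toAdd h3
  omega
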